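/- For all real numbers σ, ν ≠ 0 and all s ≠ 0 with e^{sσ} ≠ 1, the inequality (1 - 2e^{sσ}cos(sν) + e^{2sσ})/(1 - e^{sσ})² < (σ² + ν²)/σ² holds. -/

import Mathlib

open Real

/-- For all real numbers `σ, ν ≠ 0` and all `s ≠ 0` with `e^{sσ} ≠ 1`,
`(1 - 2e^{sσ}cos(sν) + e^{2sσ})/(1 - e^{sσ})² < (σ^2 + ν^2)/σ^2`. -/
theorem stmt0 (σ ν s : ℝ) (hσ : σ ≠ 0) (hν : ν ≠ 0) (hs : s ≠ 0)
    (hexp : Real.exp (s * σ) ≠ 1) :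
    (1 - 2 * Real.exp (s * σ) * Real.cos (s * ν) + Real.exp (2 * s * σ)) /
      (1 - Real.exp (s * σ)) ^ 2 < (σ ^ 2 + ν ^ 2) / σ ^ 2 := by
  have ht0 : s * σ ≠ 0 := mul_ne_zero hs hσ
  set t := s * σ with ht
  set E := Real.exp t with hEdef
  have hE : 0 < E := Real.exp_pos t
  set a := Real.exp (t / 2) with hadef
  set b := Real.exp (-(t / 2)) with hbdef
  have ha : a ^ 2 = E := by
    rw [hadef, hEdef, sq, ← Real.exp_add]; ring_nf
  have hb : a * b = 1 := by
    rw [hadef, hbdef, ← Real.exp_add]; simp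
  -- sinh bound : (t/2)^2 < sinh(t/2)^2
  have hsinh : (t / 2) ^ 2 < Real.sinh (t / 2) ^ 2 := by
    rcases ht0.lt_or_gt with h | h
    · have hu : 0 < -(t / 2) := by linarith
      have := Real.self_lt_sinh_iff.2 hu
      rw [Real.sinh_neg] at this
      nlinarith
    · have hu : 0 < t / 2 := by linarith
      have := Real.self_lt_sinh_iff.2 hu
      nlinarith
  have h3 : t ^ 2 < (a - b) ^ 2 := by
    rw [Real.sinh_eq] at hsinh
    rw [← hadef, ← hbdef] at hsinh
    nlinarith
  have h2 : E * t ^ 2 < (1 - E) ^ 2 := by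
    have heq : (1 - E) ^ 2 = E * (a - b) ^ 2 := by
      rw [← ha]
      linear_combination (2 * a ^ 2 - a * b - 1) * hb
    rw [heq]
    exact mul_lt_mul_of_pos_left h3 hE
  -- cosine bound
  have h1 : 1 - Real.cos (s * ν) < (s * ν) ^ 2 / 2 := by
    have := Real.one_sub_sq_div_two_lt_cos (x := s * ν) (mul_ne_zero hs hν)
    linarith
  have hcle : Real.cos (s * ν) ≤ 1 := Real.cos_le_one _
  have hd : 0 < (1 - E) ^ 2 := by
    have : 1 - E ≠ 0 := fun h => hexp (by rw [hEdef] at h; linarith)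
    positivity
  have hσ2 : 0 < σ ^ 2 := by positivity
  have hν2 : 0 < ν ^ 2 := by positivity
  have hE2 : Real.exp (2 * s * σ) = E ^ 2 := by
    rw [hEdef, ht, sq, ← Real.exp_add]; ring_nf
  rw [hE2, div_lt_div_iff₀ hd hσ2]
  have key1 : 2 * E * σ ^ 2 * (1 - Real.cos (s * ν)) < 2 * E * σ ^ 2 * ((s * ν) ^ 2 / 2) :=
    mul_lt_mul_of_pos_left h1 (by positivity)
  have key2 : E * t ^ 2 * ν ^ 2 < (1 - E) ^ 2 * ν ^ 2 :=
    mul_lt_mul_of_pos_right h2 hν2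
  rw [ht] at key2
  nlinarith [key1, key2]
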